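/- Let C1, C3 ⊆ (0,1) be Borel sets of positive Lebesgue measure. Suppose that λ-almost every b ∈ (0, 1 − essinf(C1)) belongs to C3, and λ-almost every b ∈ (0, 1 − essinf(C3)) belongs to C1, where essinf(C) = inf{a > 0 : λ(C ∩ (0,a]) > 0}. Then λ((0,1) \ C1) = 0 and λ((0,1) \ C3) = 0. -/

import Mathlib

open MeasureTheory Set

private lemma inf_lt_one (C : Set ℝ) (hC : C ⊆ Ioo 0 1) (hp : 0 < volume C) :
    sInf {a : ℝ | 0 < a ∧ 0 < volume (C ∩ Ioc 0 a)} < 1 := by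
  have hbdd : BddBelow {a : ℝ | 0 < a ∧ 0 < volume (C ∩ Ioc 0 a)} :=
    ⟨0, fun a ha => ha.1.le⟩
  -- find n with 0 < volume (C ∩ Ioc 0 (1 - 1/(n+2)))
  have hex : ∃ n : ℕ, 0 < volume (C ∩ Ioc 0 (1 - 1/(n+2))) := by
    by_contra h
    push_neg at h
    have hz : ∀ n : ℕ, volume (C ∩ Ioc 0 (1 - 1/(n+2))) = 0 := by
      intro n; exact le_antisymm (h n) zero_le
    have hsub : C ⊆ ⋃ n : ℕ, C ∩ Ioc 0 (1 - 1/(n+2)) := by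
      intro x hx
      obtain ⟨hx0, hx1⟩ := hC hx
      obtain ⟨n, hn⟩ := exists_nat_one_div_lt (show (0:ℝ) < 1 - x by linarith)
      refine mem_iUnion.2 ⟨n, hx, hx0, ?_⟩
      have h2 : (1:ℝ)/(n+2) ≤ 1/(n+1) := by
        apply div_le_div_of_nonneg_left (by norm_num) (by positivity) (by linarith)
      linarith
    have : volume C = 0 :=
      le_antisymm (le_trans (measure_mono hsub) (le_of_eq (measure_iUnion_null hz))) zero_le
    exact absurd this hp.ne'
  obtain ⟨n, hn⟩ := hex
  have hlt : (1:ℝ)/(n+2) < 1 := by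
    rw [div_lt_one (by positivity)]; linarith [Nat.cast_nonneg (α := ℝ) n]
  have hmem : (1 - 1/(n+2) : ℝ) ∈ {a : ℝ | 0 < a ∧ 0 < volume (C ∩ Ioc 0 a)} :=
    ⟨by linarith, hn⟩
  calc sInf {a : ℝ | 0 < a ∧ 0 < volume (C ∩ Ioc 0 a)} ≤ 1 - 1/(n+2) := csInf_le hbdd hmem
    _ < 1 := sub_lt_self 1 (by positivity)

private lemma inf_eq_zero (C : Set ℝ) (t : ℝ) (ht : 0 < t)
    (h : volume (Ioo (0:ℝ) t \ C) = 0) :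
    sInf {a : ℝ | 0 < a ∧ 0 < volume (C ∩ Ioc 0 a)} = 0 := by
  set S := {a : ℝ | 0 < a ∧ 0 < volume (C ∩ Ioc 0 a)} with hS
  have hbdd : BddBelow S := ⟨0, fun a ha => ha.1.le⟩
  have hmem : ∀ ε : ℝ, 0 < ε → ε ∈ S := by
    intro ε hε
    refine ⟨hε, ?_⟩
    set m := min ε t with hm
    have hm0 : 0 < m := lt_min hε ht
    have hsub : Ioo 0 m ⊆ (C ∩ Ioc 0 ε) ∪ (Ioo 0 t \ C) := by
      intro x hx
      by_cases hxc : x ∈ C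
      · exact Or.inl ⟨hxc, hx.1, le_of_lt (lt_of_lt_of_le hx.2 (min_le_left _ _))⟩
      · exact Or.inr ⟨⟨hx.1, lt_of_lt_of_le hx.2 (min_le_right _ _)⟩, hxc⟩
    have h1 : volume (Ioo (0:ℝ) m) ≤ volume (C ∩ Ioc 0 ε) + volume (Ioo (0:ℝ) t \ C) :=
      le_trans (measure_mono hsub) (measure_union_le _ _)
    rw [h, add_zero, Real.volume_Ioo] at h1
    have h2 : (0:ENNReal) < ENNReal.ofReal (m - 0) := by
      rw [ENNReal.ofReal_pos]; linarith
    exact lt_of_lt_of_le h2 h1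
  by_contra hne
  have h0le : 0 ≤ sInf S := le_csInf ⟨1, hmem 1 one_pos⟩ (fun a ha => ha.1.le)
  have hpos : 0 < sInf S := lt_of_le_of_ne h0le (Ne.symm hne)
  have : sInf S ≤ sInf S / 2 := csInf_le hbdd (hmem _ (by linarith))
  linarith

theorem stmt3 (C1 C3 : Set ℝ) (hC1 : C1 ⊆ Ioo 0 1) (hC3 : C3 ⊆ Ioo 0 1)
    (hm1 : MeasurableSet C1) (hm3 : MeasurableSet C3)
    (hp1 : 0 < volume C1) (hp3 : 0 < volume C3)
    (h13 : volume (Ioo (0:ℝ) (1 - sInf {a : ℝ | 0 < a ∧ 0 < volume (C1 ∩ Ioc 0 a)}) \ C3) = 0)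
    (h31 : volume (Ioo (0:ℝ) (1 - sInf {a : ℝ | 0 < a ∧ 0 < volume (C3 ∩ Ioc 0 a)}) \ C1) = 0) :
    volume (Ioo (0:ℝ) 1 \ C1) = 0 ∧ volume (Ioo (0:ℝ) 1 \ C3) = 0 := by
  have h1lt := inf_lt_one C1 hC1 hp1
  have ht1 : 0 < 1 - sInf {a : ℝ | 0 < a ∧ 0 < volume (C1 ∩ Ioc 0 a)} := by linarith
  have he3 : sInf {a : ℝ | 0 < a ∧ 0 < volume (C3 ∩ Ioc 0 a)} = 0 :=
    inf_eq_zero C3 _ ht1 h13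
  rw [he3, sub_zero] at h31
  have he1 : sInf {a : ℝ | 0 < a ∧ 0 < volume (C1 ∩ Ioc 0 a)} = 0 :=
    inf_eq_zero C1 1 one_pos h31
  rw [he1, sub_zero] at h13
  exact ⟨h31, h13⟩
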